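/- Let P be a d-dimensional reflexive polytope, B ⊆ S a nonempty set of pairwise orthogonal semisimple roots, and A := R ∩ lin_ℝ(B). Then A ⊆ S; moreover A = {b : b ∈ B} ∪ {−b : b ∈ B} ∪ {b − b' : b, b' ∈ B, b ≠ b', b equivalent to b'}, |A| = |B| + Σ_{i=1}^t c_i², where c_1, …, c_t are the cardinalities of the equivalence classes into which B is partitioned, and the number of distinct facets of P containing an element of A equals |B| + t ≤ 2|B|. -/

import Mathlib

open Finset Set Pointwise

noncomputable section

/-- The standard pairing `⟨x, y⟩ = ∑ i, x i * y i` on `ℝ^d`. -/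
def pairR {d : ℕ} (x y : Fin d → ℝ) : ℝ := ∑ i, x i * y i

/-- A point of `ℝ^d` is a lattice point if all its coordinates are integers. -/
def IsLatticePt {d : ℕ} (x : Fin d → ℝ) : Prop := ∀ i, ∃ n : ℤ, x i = (n : ℝ)

/-- A lattice polytope: the convex hull of finitely many lattice points. -/
def IsLatticePolytope {d : ℕ} (P : Set (Fin d → ℝ)) : Prop :=
  ∃ V : Finset (Fin d → ℝ), (∀ x ∈ V, IsLatticePt x) ∧
    P = convexHull ℝ (V : Set (Fin d → ℝ))

/-- The dual polytope `P* = {y : ⟨x, y⟩ ≥ -1 for all x ∈ P}`. -/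
def polarDual {d : ℕ} (P : Set (Fin d → ℝ)) : Set (Fin d → ℝ) :=
  {y | ∀ x ∈ P, -1 ≤ pairR x y}

/-- A reflexive polytope: a (full-dimensional) lattice polytope with `0` in its interior
whose dual is again a lattice polytope. -/
def IsReflexive {d : ℕ} (P : Set (Fin d → ℝ)) : Prop :=
  IsLatticePolytope P ∧ (0 : Fin d → ℝ) ∈ interior P ∧ IsLatticePolytope (polarDual P)

/-- `F` is the facet of `P` with (unique) inner normal `η` normalized by `⟨η, F⟩ = -1`:
`F` is the part of `P` where the valid inequality `⟨η, ·⟩ ≥ -1` is tight, and `F` has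
dimension `d - 1`. -/
def IsFacetNormal {d : ℕ} (P : Set (Fin d → ℝ)) (η : Fin d → ℝ)
    (F : Set (Fin d → ℝ)) : Prop :=
  (∀ x ∈ P, -1 ≤ pairR η x) ∧ F = {x ∈ P | pairR η x = -1} ∧ F.Nonempty ∧
    Module.finrank ℝ (vectorSpan ℝ F) = d - 1

/-- `F` is a facet ((d-1)-dimensional face) of `P`. -/
def IsFacet {d : ℕ} (P F : Set (Fin d → ℝ)) : Prop := ∃ η, IsFacetNormal P η F

/-- A root of `P`: a lattice point in the relative interior of a facet of `P`. -/
def IsRoot {d : ℕ} (P : Set (Fin d → ℝ)) (m : Fin d → ℝ) : Prop :=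
  IsLatticePt m ∧ ∃ F, IsFacet P F ∧ m ∈ intrinsicInterior ℝ F

/-- The facet `F_m` of `P` containing the root `m` in its relative interior
(for a root `m` there is exactly one such facet). -/
def rootFacet {d : ℕ} (P : Set (Fin d → ℝ)) (m : Fin d → ℝ) : Set (Fin d → ℝ) :=
  ⋃₀ {F | IsFacet P F ∧ m ∈ intrinsicInterior ℝ F}

/-- The inner normal `η_m = η_{F_m}` of the facet of `P` containing the root `m`. -/
def rootNormal {d : ℕ} (P : Set (Fin d → ℝ)) (m : Fin d → ℝ) : Fin d → ℝ :=
  Classical.epsilon fun η => IsFacetNormal P η (rootFacet P m)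

/-- The real extension of the `ℤ`-linear map on the lattice given by an integer matrix. -/
def intMatMap {d : ℕ} (A : Matrix (Fin d) (Fin d) ℤ) (x : Fin d → ℝ) : Fin d → ℝ :=
  (A.map (Int.cast : ℤ → ℝ)).mulVec x

/-- `P` and `Q` are isomorphic as lattice polytopes: some `g ∈ GL_d(ℤ)` has real
extension mapping `P` onto `Q`. -/
def IsLatticeIso {d : ℕ} (P Q : Set (Fin d → ℝ)) : Prop :=
  ∃ A : Matrix (Fin d) (Fin d) ℤ, IsUnit A.det ∧ intMatMap A '' P = Q

end


open scoped Classical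

namespace Aux
variable {d : ℕ}

theorem pairR_comm (x y : Fin d → ℝ) : pairR x y = pairR y x := by
  unfold pairR; exact Finset.sum_congr rfl fun i _ => mul_comm _ _

theorem pairR_add_right (x y z : Fin d → ℝ) : pairR x (y + z) = pairR x y + pairR x z := by
  unfold pairR; rw [← Finset.sum_add_distrib]; exact Finset.sum_congr rfl fun i _ => by
    simp [mul_add]

theorem pairR_smul_right (x : Fin d → ℝ) (c : ℝ) (y : Fin d → ℝ) :
    pairR x (c • y) = c * pairR x y := by
  unfold pairR; rw [Finset.mul_sum]; exact Finset.sum_congr rfl fun i _ => by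
    simp [Pi.smul_apply]; ring

theorem pairR_neg_right (x y : Fin d → ℝ) : pairR x (-y) = -pairR x y := by
  have := pairR_smul_right x (-1) y; simpa using this

theorem pairR_sub_right (x y z : Fin d → ℝ) : pairR x (y - z) = pairR x y - pairR x z := by
  have := pairR_add_right x y (-z); rw [pairR_neg_right] at this
  simpa [sub_eq_add_neg] using this

theorem pairR_zero_right (x : Fin d → ℝ) : pairR x 0 = 0 := by unfold pairR; simp

theorem pairR_add_left (x y z : Fin d → ℝ) : pairR (x + y) z = pairR x z + pairR y z := by
  rw [pairR_comm, pairR_add_right, pairR_comm z x, pairR_comm z y]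

theorem pairR_neg_left (x y : Fin d → ℝ) : pairR (-x) y = -pairR x y := by
  rw [pairR_comm, pairR_neg_right, pairR_comm]

theorem pairR_smul_left (c : ℝ) (x y : Fin d → ℝ) : pairR (c • x) y = c * pairR x y := by
  rw [pairR_comm, pairR_smul_right, pairR_comm]

theorem pairR_sum_right {α : Type*} (s : Finset α) (x : Fin d → ℝ) (f : α → Fin d → ℝ) :
    pairR x (∑ a ∈ s, f a) = ∑ a ∈ s, pairR x (f a) := by
  classical
  induction s using Finset.induction with
  | empty => simp [pairR_zero_right]
  | insert _ _ h ih => rw [Finset.sum_insert h, pairR_add_right, ih, Finset.sum_insert h]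

theorem pairR_self_nonneg (x : Fin d → ℝ) : 0 ≤ pairR x x :=
  Finset.sum_nonneg fun i _ => mul_self_nonneg _

theorem eq_zero_of_pairR_self (x : Fin d → ℝ) (h : pairR x x = 0) : x = 0 := by
  have : ∀ i ∈ Finset.univ, x i * x i = 0 :=
    (Finset.sum_eq_zero_iff_of_nonneg (fun i _ => mul_self_nonneg _)).1 h
  funext i
  have := this i (Finset.mem_univ i)
  exact mul_self_eq_zero.mp this

theorem pairR_isLinearMap (x : Fin d → ℝ) : IsLinearMap ℝ (fun y => pairR x y) :=
  ⟨fun y z => pairR_add_right x y z, fun c y => by rw [pairR_smul_right]; rfl⟩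

theorem continuous_pairR (x : Fin d → ℝ) : Continuous (fun y => pairR x y) := by
  unfold pairR
  exact continuous_finset_sum _ fun i _ => (continuous_const.mul (continuous_apply i))

theorem pairR_int (x y : Fin d → ℝ) (hx : IsLatticePt x) (hy : IsLatticePt y) :
    ∃ n : ℤ, pairR x y = (n : ℝ) := by
  classical
  choose f hf using hx
  choose g hg using hy
  refine ⟨∑ i, f i * g i, ?_⟩
  unfold pairR
  push_cast
  exact Finset.sum_congr rfl fun i _ => by rw [hf i, hg i]

theorem latticePt_neg {x : Fin d → ℝ} (hx : IsLatticePt x) : IsLatticePt (-x) := by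
  intro i; obtain ⟨n, hn⟩ := hx i; exact ⟨-n, by simp [hn]⟩

theorem latticePt_sub {x y : Fin d → ℝ} (hx : IsLatticePt x) (hy : IsLatticePt y) :
    IsLatticePt (x - y) := by
  intro i; obtain ⟨n, hn⟩ := hx i; obtain ⟨m, hm⟩ := hy i
  exact ⟨n - m, by simp [hn, hm]⟩

variable {d : ℕ} {P F : Set (Fin d → ℝ)} {η m : Fin d → ℝ}

theorem facet_subset (h : IsFacetNormal P η F) : F ⊆ P := by
  intro x hx; rw [h.2.1] at hx; exact hx.1

theorem facet_pair (h : IsFacetNormal P η F) {x} (hx : x ∈ F) : pairR η x = -1 := by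
  rw [h.2.1] at hx; exact hx.2

theorem facet_span_pair (h : IsFacetNormal P η F) {x} (hx : x ∈ affineSpan ℝ F) :
    pairR η x = -1 := by
  refine affineSpan_induction (p := fun x => pairR η x = -1) hx (fun y hy => facet_pair h hy) ?_
  intro c u v w hu hv hw
  have : c • (u -ᵥ v) +ᵥ w = c • (u - v) + w := rfl
  rw [this, pairR_add_right, pairR_smul_right, pairR_sub_right, hu, hv, hw]
  ring

theorem facet_d_pos (h : IsFacetNormal P η F) : 1 ≤ d := by
  by_contra hd
  push_neg at hd
  interval_cases d
  obtain ⟨x, hx⟩ := h.2.2.1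
  have := facet_pair h hx
  unfold pairR at this
  simp at this

theorem relint_perturb (hm : m ∈ intrinsicInterior ℝ F) {w} (hw : w ∈ vectorSpan ℝ F) :
    ∃ ε : ℝ, 0 < ε ∧ m + ε • w ∈ F := by
  obtain ⟨p, hp, hpm⟩ := hm
  have hmspan : m ∈ affineSpan ℝ F := hpm ▸ p.2
  have hw' : w ∈ (affineSpan ℝ F).direction := by rw [direction_affineSpan]; exact hw
  have hmem : ∀ ε : ℝ, m + ε • w ∈ affineSpan ℝ F := fun ε => by
    have : (ε • w) +ᵥ m ∈ affineSpan ℝ F :=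
      AffineSubspace.vadd_mem_of_mem_direction (Submodule.smul_mem _ ε hw') hmspan
    simpa [vadd_eq_add, add_comm] using this
  set γ : ℝ → affineSpan ℝ F := fun ε => ⟨m + ε • w, hmem ε⟩ with hγ
  have hcont : Continuous γ := by
    apply Continuous.subtype_mk
    exact continuous_const.add (continuous_id.smul continuous_const)
  have hγ0 : γ 0 = p := by
    apply Subtype.ext; simp [hγ, ← hpm]
  have hopen : IsOpen (γ ⁻¹' interior (((↑) : affineSpan ℝ F → _) ⁻¹' F)) :=
    isOpen_interior.preimage hcont
  have h0 : (0 : ℝ) ∈ γ ⁻¹' interior (((↑) : affineSpan ℝ F → _) ⁻¹' F) := by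
    simp only [Set.mem_preimage, hγ0]; exact hp
  obtain ⟨ε, hε, hball⟩ := Metric.isOpen_iff.1 hopen 0 h0
  refine ⟨ε / 2, by linarith, ?_⟩
  have : γ (ε / 2) ∈ interior (((↑) : affineSpan ℝ F → _) ⁻¹' F) := by
    apply hball
    rw [Metric.mem_ball, Real.dist_eq]
    rw [sub_zero, abs_of_nonneg (by linarith : (0:ℝ) ≤ ε / 2)]
    linarith
  have := interior_subset this
  exact this

theorem relint_pair_zero (hm : m ∈ intrinsicInterior ℝ F) {w} (hw : w ∈ vectorSpan ℝ F)
    {y : Fin d → ℝ} (hy : ∀ x ∈ F, -1 ≤ pairR y x) (hym : pairR y m = -1) :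
    pairR y w = 0 := by
  have key : ∀ v ∈ vectorSpan ℝ F, 0 ≤ pairR y v := by
    intro v hv
    obtain ⟨ε, hε, hεF⟩ := relint_perturb hm hv
    have := hy _ hεF
    rw [pairR_add_right, hym, pairR_smul_right] at this
    nlinarith
  have h1 := key w hw
  have h2 := key (-w) (by simpa using (vectorSpan ℝ F).neg_mem hw)
  have : pairR y (-w) = -pairR y w := by
    have := pairR_sub_right y 0 w; simpa [pairR_zero_right] using this
  linarith [h2, this ▸ h2]

theorem facet_normal_unique (h : IsFacetNormal P η F) (hm : m ∈ intrinsicInterior ℝ F)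
    {y} (hy : ∀ x ∈ P, -1 ≤ pairR y x) (hym : pairR y m = -1) : y = η := by
  have hmF : m ∈ F := intrinsicInterior_subset hm
  have hd := facet_d_pos h
  -- z := y - η is orthogonal to vectorSpan F and to m
  set z := y - η with hz
  have hzw : ∀ w ∈ vectorSpan ℝ F, pairR z w = 0 := by
    intro w hw
    have h1 : pairR y w = 0 :=
      relint_pair_zero hm hw (fun x hx => hy x (facet_subset h hx)) hym
    have h2 : pairR η w = 0 :=
      relint_pair_zero hm hw (fun x hx => h.1 x (facet_subset h hx)) (facet_pair h hmF)
    have : pairR (y - η) w = pairR y w - pairR η w := by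
      rw [pairR_comm, pairR_sub_right, pairR_comm w y, pairR_comm w η]
    rw [this, h1, h2]; ring
  have hzm : pairR z m = 0 := by
    have : pairR (y - η) m = pairR y m - pairR η m := by
      rw [pairR_comm, pairR_sub_right, pairR_comm m y, pairR_comm m η]
    rw [this, hym, facet_pair h hmF]; ring
  -- m ∉ vectorSpan F since pairR η m = -1 but pairR η w = 0 on vectorSpan
  have hmnot : m ∉ vectorSpan ℝ F := by
    intro hmem
    have h2 : pairR η m = 0 :=
      relint_pair_zero hm hmem (fun x hx => h.1 x (facet_subset h hx)) (facet_pair h hmF)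
    rw [facet_pair h hmF] at h2; norm_num at h2
  -- vectorSpan F ⊔ span {m} = ⊤
  have htop : vectorSpan ℝ F ⊔ Submodule.span ℝ {m} = ⊤ := by
    apply Submodule.eq_top_of_finrank_eq
    have hlt : vectorSpan ℝ F < vectorSpan ℝ F ⊔ Submodule.span ℝ {m} := by
      refine lt_of_le_of_ne le_sup_left ?_
      intro heq
      apply hmnot
      rw [heq]
      exact Submodule.mem_sup_right (Submodule.mem_span_singleton_self m)
    have := Submodule.finrank_lt_finrank_of_lt hlt
    rw [h.2.2.2] at this
    have hle : Module.finrank ℝ ↥(vectorSpan ℝ F ⊔ Submodule.span ℝ {m}) ≤ d := by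
      have := Submodule.finrank_le (vectorSpan ℝ F ⊔ Submodule.span ℝ {m})
      simpa [Module.finrank_pi] using this
    have : d - 1 < Module.finrank ℝ ↥(vectorSpan ℝ F ⊔ Submodule.span ℝ {m}) := this
    have : Module.finrank ℝ ↥(vectorSpan ℝ F ⊔ Submodule.span ℝ {m}) = d := by omega
    rw [this, Module.finrank_pi]
    simp
  -- z ⊥ everything
  have hzz : pairR z z = 0 := by
    have hztop : z ∈ (⊤ : Submodule ℝ (Fin d → ℝ)) := Submodule.mem_top
    rw [← htop] at hztop
    obtain ⟨u, hu, v, hv, huv⟩ := Submodule.mem_sup.1 hztop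
    obtain ⟨c, hc⟩ := Submodule.mem_span_singleton.1 hv
    have h' : pairR z z = pairR z (u + v) := by rw [huv]
    rw [h', pairR_add_right, hzw u hu, ← hc, pairR_smul_right, hzm]
    ring
  have := eq_zero_of_pairR_self z hzz
  rw [hz, sub_eq_zero] at this
  exact this


variable {d : ℕ} {P : Set (Fin d → ℝ)} {m : Fin d → ℝ}

theorem root_facet_eq (hm : IsRoot P m) {F η} (hη : IsFacetNormal P η F)
    (hrel : m ∈ intrinsicInterior ℝ F) : rootFacet P m = F := by
  have hset : {F' | IsFacet P F' ∧ m ∈ intrinsicInterior ℝ F'} = {F} := by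
    ext F'
    simp only [Set.mem_setOf_eq, Set.mem_singleton_iff]
    constructor
    · rintro ⟨⟨η', hη'⟩, hrel'⟩
      have hmF' : m ∈ F' := intrinsicInterior_subset hrel'
      have : η = η' :=
        facet_normal_unique hη' hrel' hη.1 (facet_pair hη (intrinsicInterior_subset hrel))
      rw [hη'.2.1, ← this, ← hη.2.1]
    · rintro rfl
      exact ⟨⟨η, hη⟩, hrel⟩
  rw [rootFacet, hset, Set.sUnion_singleton]

theorem root_spec (hm : IsRoot P m) :
    IsFacetNormal P (rootNormal P m) (rootFacet P m) ∧
      m ∈ intrinsicInterior ℝ (rootFacet P m) := by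
  obtain ⟨hlat, F, ⟨η, hη⟩, hrel⟩ := hm
  have heq := root_facet_eq ⟨hlat, F, ⟨η, hη⟩, hrel⟩ hη hrel
  have hex : ∃ η', IsFacetNormal P η' (rootFacet P m) := ⟨η, heq ▸ hη⟩
  exact ⟨Classical.epsilon_spec hex, heq ▸ hrel⟩

theorem root_normal_eq (hm : IsRoot P m) {y} (hy : ∀ x ∈ P, -1 ≤ pairR y x)
    (hym : pairR y m = -1) : y = rootNormal P m :=
  facet_normal_unique (root_spec hm).1 (root_spec hm).2 hy hym

theorem root_mem_P (hm : IsRoot P m) : m ∈ P :=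
  facet_subset (root_spec hm).1 (intrinsicInterior_subset (root_spec hm).2)

theorem root_pair_self (hm : IsRoot P m) : pairR (rootNormal P m) m = -1 :=
  facet_pair (root_spec hm).1 (intrinsicInterior_subset (root_spec hm).2)

theorem root_valid (hm : IsRoot P m) : ∀ x ∈ P, -1 ≤ pairR (rootNormal P m) x :=
  (root_spec hm).1.1

theorem rootNormal_mem_dual (hm : IsRoot P m) : rootNormal P m ∈ polarDual P :=
  fun x hx => by rw [pairR_comm]; exact root_valid hm x hx

-- Bipolar
theorem P_closed (hP : IsLatticePolytope P) : IsClosed P := by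
  obtain ⟨V, _, rfl⟩ := hP
  exact (V.finite_toSet.isCompact_convexHull ℝ).isClosed

theorem P_convex (hP : IsLatticePolytope P) : Convex ℝ P := by
  obtain ⟨V, _, rfl⟩ := hP
  exact convex_convexHull ℝ _

theorem mem_of_forall_dual (hP : IsReflexive P) {x : Fin d → ℝ}
    (h : ∀ y ∈ polarDual P, -1 ≤ pairR x y) : x ∈ P := by
  by_contra hx
  obtain ⟨f, u, hfx, hfP⟩ :=
    geometric_hahn_banach_point_closed (P_convex hP.1) (P_closed hP.1) hx
  have h0P : (0 : Fin d → ℝ) ∈ P := interior_subset hP.2.1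
  have hu : u < 0 := by have := hfP 0 h0P; simpa using this
  set v : Fin d → ℝ := fun i => f (fun j => if i = j then 1 else 0) with hv
  have hfv : ∀ z : Fin d → ℝ, pairR z v = f z := by
    intro z
    conv_rhs => rw [pi_eq_sum_univ z]
    rw [map_sum]
    unfold pairR
    refine Finset.sum_congr rfl fun i _ => ?_
    rw [map_smul, smul_eq_mul, hv]
  set η := (-u)⁻¹ • v with hη
  have hupos : 0 < -u := by linarith
  have hηdual : η ∈ polarDual P := by
    intro p hp
    rw [hη, pairR_smul_right, hfv]
    have : u < f p := hfP p hp
    have h1 : (-u)⁻¹ * u < (-u)⁻¹ * f p := by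
      apply mul_lt_mul_of_pos_left this (inv_pos.2 hupos)
    have h2 : (-u)⁻¹ * u = -1 := by rw [inv_mul_eq_div, div_neg, div_self (ne_of_lt hu)]
    linarith
  have := h η hηdual
  rw [hη, pairR_smul_right, hfv] at this
  have h1 : (-u)⁻¹ * f x < (-u)⁻¹ * u := mul_lt_mul_of_pos_left hfx (inv_pos.2 hupos)
  have h2 : (-u)⁻¹ * u = -1 := by rw [inv_mul_eq_div, div_neg, div_self (ne_of_lt hu)]
  linarith

theorem mem_P_iff (hP : IsReflexive P) {W : Finset (Fin d → ℝ)}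
    (hW : polarDual P = convexHull ℝ (W : Set (Fin d → ℝ))) {x : Fin d → ℝ} :
    x ∈ P ↔ ∀ u ∈ W, -1 ≤ pairR u x := by
  constructor
  · intro hx u hu
    have : u ∈ polarDual P := by rw [hW]; exact subset_convexHull ℝ _ hu
    rw [pairR_comm]; exact this x hx
  · intro h
    apply mem_of_forall_dual hP
    intro y hy
    rw [hW] at hy
    have hconv : Convex ℝ {y : Fin d → ℝ | -1 ≤ pairR x y} :=
      convex_halfSpace_ge ⟨fun a b => by
        unfold pairR; rw [← Finset.sum_add_distrib]
        exact Finset.sum_congr rfl fun i _ => by simp [mul_add], fun c a => by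
        rw [pairR_smul_right]; rfl⟩ (-1)
    have : (W : Set (Fin d → ℝ)) ⊆ {y | -1 ≤ pairR x y} := fun u hu => by
      show -1 ≤ pairR x u
      rw [pairR_comm]; exact h u hu
    exact convexHull_min this hconv hy

theorem rootNormal_lattice (hP : IsReflexive P) {W : Finset (Fin d → ℝ)}
    (hWlat : ∀ u ∈ W, IsLatticePt u)
    (hW : polarDual P = convexHull ℝ (W : Set (Fin d → ℝ)))
    (hm : IsRoot P m) : rootNormal P m ∈ W ∧ IsLatticePt (rootNormal P m) := by
  have hηd := rootNormal_mem_dual hm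
  rw [hW, Finset.convexHull_eq] at hηd
  obtain ⟨w, hw0, hw1, hwc⟩ := hηd
  have hcm : ∑ u ∈ W, w u • u = rootNormal P m := by
    rw [← hwc, Finset.centerMass_eq_of_sum_1 _ _ hw1]; rfl
  have hWdual : ∀ u ∈ W, u ∈ polarDual P := fun u hu => by
    rw [hW]; exact subset_convexHull ℝ _ hu
  have hpair : ∑ u ∈ W, w u * pairR m u = -1 := by
    have h1 : pairR m (∑ u ∈ W, w u • u) = -1 := by
      rw [hcm, pairR_comm]; exact root_pair_self hm
    rw [pairR_sum_right] at h1
    rw [← h1]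
    exact Finset.sum_congr rfl fun u _ => (pairR_smul_right m (w u) u).symm
  have hterm : ∀ u ∈ W, w u * (pairR m u + 1) = 0 := by
    have hsum0 : ∑ u ∈ W, w u * (pairR m u + 1) = 0 := by
      have : ∀ u ∈ W, w u * (pairR m u + 1) = w u * pairR m u + w u :=
        fun u _ => by ring
      rw [Finset.sum_congr rfl this, Finset.sum_add_distrib, hpair, hw1]
      ring
    intro u hu
    exact (Finset.sum_eq_zero_iff_of_nonneg (fun u hu => mul_nonneg (hw0 u hu)
      (by linarith [hWdual u hu m (root_mem_P hm)]))).1 hsum0 u hu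
  have hex : ∃ u ∈ W, 0 < w u := by
    by_contra hc
    push_neg at hc
    have : ∑ u ∈ W, w u = 0 :=
      Finset.sum_eq_zero fun u hu => le_antisymm (hc u hu) (hw0 u hu)
    rw [hw1] at this; norm_num at this
  obtain ⟨u, huW, hwu⟩ := hex
  have hpu : pairR m u = -1 := by
    have := hterm u huW
    rcases mul_eq_zero.1 this with h | h
    · exact absurd h (ne_of_gt hwu)
    · linarith
  have : u = rootNormal P m := by
    apply root_normal_eq hm
    · intro x hx; rw [pairR_comm]; exact hWdual u huW x hx
    · rw [pairR_comm]; exact hpu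
  rw [← this]
  exact ⟨huW, hWlat u huW⟩


variable {d : ℕ} {P : Set (Fin d → ℝ)} {m b b' : Fin d → ℝ}

theorem dual_pt_eq_normal (hm : IsRoot P m) {u} (hu : u ∈ polarDual P)
    (h : pairR u m = -1) : u = rootNormal P m :=
  root_normal_eq hm (fun x hx => by rw [pairR_comm]; exact hu x hx) h

theorem int_ge_cases {a : ℝ} (h : ∃ n : ℤ, a = (n : ℝ)) (h1 : -1 ≤ a) : a = -1 ∨ 0 ≤ a := by
  obtain ⟨n, rfl⟩ := h
  have : (-1 : ℤ) ≤ n := by exact_mod_cast h1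
  rcases eq_or_lt_of_le this with h | h
  · left; exact_mod_cast h.symm
  · right; exact_mod_cast (by omega : (0:ℤ) ≤ n)

theorem int_le_cases {a : ℝ} (h : ∃ n : ℤ, a = (n : ℝ)) (h1 : a ≤ 1) : a = 1 ∨ a ≤ 0 := by
  obtain ⟨n, rfl⟩ := h
  have : n ≤ (1 : ℤ) := by exact_mod_cast h1
  rcases eq_or_lt_of_le this with h | h
  · left; exact_mod_cast h
  · right; exact_mod_cast (by omega : n ≤ (0:ℤ))

theorem rootNormal_neg_eq_of_facet_eq (hfac : rootFacet P (-b) = rootFacet P (-b')) :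
    rootNormal P (-b) = rootNormal P (-b') := by
  unfold rootNormal
  rw [hfac]

theorem sub_is_root (hP : IsReflexive P) {W : Finset (Fin d → ℝ)}
    (hWlat : ∀ u ∈ W, IsLatticePt u)
    (hW : polarDual P = convexHull ℝ (W : Set (Fin d → ℝ)))
    (hb : IsRoot P b) (hnb : IsRoot P (-b)) (hb' : IsRoot P b') (hnb' : IsRoot P (-b'))
    (ho1 : pairR (rootNormal P b) b' = 0)
    (hfac : rootFacet P (-b) = rootFacet P (-b')) :
    IsRoot P (b - b') ∧ rootFacet P (b - b') = rootFacet P b := by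
  set η := rootNormal P b with hηdef
  set θ := rootNormal P (-b) with hθdef
  have hθ' : θ = rootNormal P (-b') := rootNormal_neg_eq_of_facet_eq hfac
  have pθb : pairR θ b = 1 := by
    have := root_pair_self hnb
    rw [← hθdef, pairR_neg_right] at this
    linarith
  have pηb : pairR η b = -1 := root_pair_self hb
  have hWdual : ∀ u ∈ W, u ∈ polarDual P := fun u hu => by
    rw [hW]; exact subset_convexHull ℝ _ hu
  -- key estimates for every dual vertex
  have key : ∀ u ∈ W, -1 ≤ pairR u (b - b') ∧ (pairR u (b - b') = -1 → u = η) := by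
    intro u huW
    have hud := hWdual u huW
    have hub : -1 ≤ pairR u b := by rw [pairR_comm]; exact hud b (root_mem_P hb)
    have hub' : -1 ≤ pairR u b' := by rw [pairR_comm]; exact hud b' (root_mem_P hb')
    have hubn' : pairR u b' ≤ 1 := by
      have h2 := hud (-b') (root_mem_P hnb')
      rw [pairR_comm, pairR_neg_right] at h2
      linarith
    have hint : ∃ n : ℤ, pairR u b = (n : ℝ) := pairR_int u b (hWlat u huW) hb.1
    have hint' : ∃ n : ℤ, pairR u b' = (n : ℝ) := pairR_int u b' (hWlat u huW) hb'.1
    have hsub : pairR u (b - b') = pairR u b - pairR u b' := pairR_sub_right u b b'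
    rcases int_ge_cases hint hub with hcase | hcase
    · -- pairR u b = -1 : u = η
      have huη : u = η := dual_pt_eq_normal hb hud hcase
      have : pairR u b' = 0 := by rw [huη]; exact ho1
      constructor
      · rw [hsub, hcase, this]; norm_num
      · intro _; exact huη
    · -- 0 ≤ pairR u b
      rcases int_le_cases hint' hubn' with hcase' | hcase'
      · -- pairR u b' = 1 : u = θ, so pairR u b = 1
        have huθ : u = θ := by
          rw [hθ']
          apply dual_pt_eq_normal hnb' hud
          rw [pairR_neg_right, hcase']
        have hub1 : pairR u b = 1 := by rw [huθ]; exact pθb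
        constructor
        · rw [hsub, hub1, hcase']; norm_num
        · intro habs; rw [hsub, hub1, hcase'] at habs; norm_num at habs
      · -- pairR u b' ≤ 0
        constructor
        · rw [hsub]; linarith
        · intro habs; rw [hsub] at habs; linarith
  -- b - b' ∈ P
  have hm0P : b - b' ∈ P := (mem_P_iff hP hW).2 fun u hu => (key u hu).1
  -- b - b' ∈ rootFacet P b
  have hspec := root_spec hb
  have hm0F : b - b' ∈ rootFacet P b := by
    rw [hspec.1.2.1]
    refine ⟨hm0P, ?_⟩
    rw [pairR_sub_right, pηb, ho1]; norm_num
  -- η is a lattice point? not needed; show relint membership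
  set F := rootFacet P b with hFdef
  have hspan : ∀ x ∈ affineSpan ℝ F, pairR η x = -1 := fun x hx =>
    facet_span_pair hspec.1 hx
  set Wo : Set (Fin d → ℝ) := {x | ∀ u ∈ W, u ≠ η → -1 < pairR u x} with hWo
  have hWoOpen : IsOpen Wo := by
    have : Wo = ⋂ (u : W), {x | u.1 ≠ η → -1 < pairR u.1 x} := by
      ext x
      simp only [hWo, Set.mem_setOf_eq, Set.mem_iInter, Subtype.forall]
    rw [this]
    apply isOpen_iInter_of_finite
    intro u
    by_cases hu : u.1 = η
    · simp [hu]
    · have : {x | u.1 ≠ η → -1 < pairR u.1 x} = {x | -1 < pairR u.1 x} := by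
        ext x; simp [hu]
      rw [this]
      exact isOpen_lt continuous_const (continuous_pairR u.1)
  have hm0Wo : b - b' ∈ Wo := by
    intro u huW hune
    rcases lt_or_eq_of_le (key u huW).1 with h | h
    · exact h
    · exact absurd ((key u huW).2 h.symm) hune
  have hsub : ∀ x ∈ affineSpan ℝ F, x ∈ Wo → x ∈ F := by
    intro x hxspan hxWo
    have hxη : pairR η x = -1 := hspan x hxspan
    have hxP : x ∈ P := by
      rw [mem_P_iff hP hW]
      intro u huW
      by_cases hu : u = η
      · rw [hu, hxη]
      · exact le_of_lt (hxWo u huW hu)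
    rw [hspec.1.2.1]
    exact ⟨hxP, hxη⟩
  have hrel : b - b' ∈ intrinsicInterior ℝ F := by
    refine ⟨⟨b - b', subset_affineSpan ℝ F hm0F⟩, ?_, rfl⟩
    have hss : (Subtype.val ⁻¹' Wo : Set (affineSpan ℝ F)) ⊆ Subtype.val ⁻¹' F :=
      fun y hy => hsub y.1 y.2 hy
    exact interior_maximal hss (hWoOpen.preimage continuous_subtype_val) hm0Wo
  have hroot : IsRoot P (b - b') :=
    ⟨latticePt_sub hb.1 hb'.1, F, ⟨η, hspec.1⟩, hrel⟩
  exact ⟨hroot, root_facet_eq hroot hspec.1 hrel⟩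


variable {d : ℕ} {P : Set (Fin d → ℝ)} {b b' m : Fin d → ℝ}

theorem rootFacet_normal_eq {x y : Fin d → ℝ} (h : rootFacet P x = rootFacet P y) :
    rootNormal P x = rootNormal P y := by
  unfold rootNormal; rw [h]

theorem normal_facet_eq {x y : Fin d → ℝ} (hx : IsRoot P x) (hy : IsRoot P y)
    (h : rootNormal P x = rootNormal P y) : rootFacet P x = rootFacet P y := by
  rw [(root_spec hx).1.2.1, (root_spec hy).1.2.1, h]

theorem int_nonpos_cases {a : ℝ} (h : ∃ n : ℤ, a = (n : ℝ)) (h1 : a ≤ 0) :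
    a = 0 ∨ a ≤ -1 := by
  obtain ⟨n, rfl⟩ := h
  have : n ≤ (0 : ℤ) := by exact_mod_cast h1
  rcases eq_or_lt_of_le this with h | h
  · left; exact_mod_cast h
  · right; exact_mod_cast (by omega : n ≤ (-1 : ℤ))

theorem sum_nonpos_int_ge_neg_one {α : Type*} (s : Finset α) (f : α → ℝ)
    (hint : ∀ a ∈ s, ∃ n : ℤ, f a = (n : ℝ)) (hnp : ∀ a ∈ s, f a ≤ 0)
    (hsum : -1 ≤ ∑ a ∈ s, f a) :
    (∀ a ∈ s, f a = 0) ∨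
      (∃ a ∈ s, f a = -1 ∧ ∀ a' ∈ s, a' ≠ a → f a' = 0) := by
  classical
  by_cases hall : ∀ a ∈ s, f a = 0
  · left; exact hall
  push_neg at hall
  obtain ⟨a, has, hfa⟩ := hall
  have hfale : f a ≤ -1 := (int_nonpos_cases (hint a has) (hnp a has)).resolve_left hfa
  have hsplit : ∑ a' ∈ s, f a' = f a + ∑ a' ∈ s.erase a, f a' :=
    (Finset.add_sum_erase _ _ has).symm
  have herase_np : ∀ x ∈ s.erase a, f x ≤ 0 := fun x hx =>
    hnp x (Finset.mem_of_mem_erase hx)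
  have herase0 : ∑ a' ∈ s.erase a, f a' = 0 :=
    le_antisymm (Finset.sum_nonpos herase_np) (by rw [hsplit] at hsum; linarith)
  have hzero : ∀ x ∈ s.erase a, f x = 0 :=
    (Finset.sum_eq_zero_iff_of_nonpos herase_np).1 herase0
  right
  refine ⟨a, has, ?_, fun a' ha' hne => hzero a' (Finset.mem_erase.2 ⟨hne, ha'⟩)⟩
  rw [hsplit, herase0] at hsum
  linarith

section Table
variable (hP : IsReflexive P)
  {W : Finset (Fin d → ℝ)} (hWlat : ∀ u ∈ W, IsLatticePt u)
  (hW : polarDual P = convexHull ℝ (W : Set (Fin d → ℝ)))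
  {B : Finset (Fin d → ℝ)}
  (hBroot : ∀ b ∈ B, IsRoot P b ∧ IsRoot P (-b))
  (horth : ∀ b ∈ B, ∀ b' ∈ B, b ≠ b' →
    pairR (rootNormal P b) b' = 0 ∧ pairR (rootNormal P b') b = 0)

include hBroot horth in
theorem table1 (hb : b ∈ B) (hb' : b' ∈ B) :
    pairR (rootNormal P b) b' = if b' = b then -1 else 0 := by
  by_cases h : b' = b
  · rw [if_pos h, h]; exact root_pair_self (hBroot b hb).1
  · rw [if_neg h]; exact (horth b hb b' hb' (fun hh => h hh.symm)).1

include hP hWlat hW hBroot horth in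
theorem theta_pair_self (hb : b ∈ B) : pairR (rootNormal P (-b)) b = 1 := by
  have := root_pair_self (hBroot b hb).2
  rw [pairR_neg_right] at this
  linarith

include hP hWlat hW hBroot horth in
theorem table2 (hb : b ∈ B) (hb' : b' ∈ B) :
    pairR (rootNormal P (-b)) b' =
      if rootFacet P (-b) = rootFacet P (-b') then 1 else 0 := by
  by_cases h : rootFacet P (-b) = rootFacet P (-b')
  · rw [if_pos h, rootFacet_normal_eq h]
    exact theta_pair_self hP hWlat hW hBroot horth hb'
  · rw [if_neg h]
    have hne : b ≠ b' := fun hh => h (by rw [hh])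
    set θ := rootNormal P (-b) with hθ
    have hθdual : θ ∈ polarDual P := rootNormal_mem_dual (hBroot b hb).2
    have hlo : -1 ≤ pairR θ b' := root_valid (hBroot b hb).2 b' (root_mem_P (hBroot b' hb').1)
    have hhi : pairR θ b' ≤ 1 := by
      have := root_valid (hBroot b hb).2 (-b') (root_mem_P (hBroot b' hb').2)
      rw [pairR_neg_right] at this
      linarith
    have hint : ∃ n : ℤ, pairR θ b' = (n : ℝ) :=
      pairR_int θ b' (rootNormal_lattice hP hWlat hW (hBroot b hb).2).2 (hBroot b' hb').1.1
    rcases int_ge_cases hint hlo with hc | hc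
    · exfalso
      have : θ = rootNormal P b' := dual_pt_eq_normal (hBroot b' hb').1 hθdual hc
      have h2 : pairR (rootNormal P b') b = 0 := (horth b hb b' hb' hne).2
      rw [← this] at h2
      have h3 : pairR θ b = 1 := theta_pair_self hP hWlat hW hBroot horth hb
      linarith
    rcases int_le_cases hint hhi with hc' | hc'
    · exfalso
      have : θ = rootNormal P (-b') := by
        apply dual_pt_eq_normal (hBroot b' hb').2 hθdual
        rw [pairR_neg_right, hc']
      exact h (normal_facet_eq (hBroot b hb).2 (hBroot b' hb').2 this)
    linarith

include hBroot horth in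
theorem eta_inj (hb : b ∈ B) (hb' : b' ∈ B) (hne : b ≠ b') :
    rootNormal P b ≠ rootNormal P b' := by
  intro h
  have h1 : pairR (rootNormal P b) b = -1 := root_pair_self (hBroot b hb).1
  have h2 : pairR (rootNormal P b') b = 0 := (horth b hb b' hb' hne).2
  rw [← h] at h2
  linarith

include hP hWlat hW hBroot horth in
theorem eta_ne_theta (hb : b ∈ B) (hb' : b' ∈ B) :
    rootNormal P b ≠ rootNormal P (-b') := by
  intro h
  have h1 : pairR (rootNormal P b) b = -1 := root_pair_self (hBroot b hb).1
  have h2 := table2 hP hWlat hW hBroot horth hb' hb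
  rw [← h, h1] at h2
  by_cases hc : rootFacet P (-b') = rootFacet P (-b)
  · rw [if_pos hc] at h2; norm_num at h2
  · rw [if_neg hc] at h2; norm_num at h2

include hP hWlat hW hBroot horth in
theorem classify
    {t : ℕ} {C : Fin t → Finset (Fin d → ℝ)}
    (hCne : ∀ i, (C i).Nonempty)
    (hCcover : ∀ b, b ∈ B ↔ ∃ i, b ∈ C i)
    (hCdisj : ∀ i j, i ≠ j → Disjoint (C i) (C j))
    (hCeq : ∀ i, ∀ b ∈ C i, ∀ b' ∈ C i, rootFacet P (-b) = rootFacet P (-b'))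
    (hCsep : ∀ i j, i ≠ j → ∀ b ∈ C i, ∀ b' ∈ C j, rootFacet P (-b) ≠ rootFacet P (-b'))
    (hm : IsRoot P m) (hmspan : m ∈ Submodule.span ℝ (B : Set (Fin d → ℝ))) :
    (∃ b ∈ B, m = b) ∨ (∃ b ∈ B, m = -b) ∨
      (∃ b ∈ B, ∃ b' ∈ B, b ≠ b' ∧ rootFacet P (-b) = rootFacet P (-b') ∧ m = b - b') := by
  classical
  obtain ⟨c, -, hc⟩ := Submodule.mem_span_finset.1 hmspan
  have hCsub : ∀ i, ∀ b ∈ C i, b ∈ B := fun i b hb => (hCcover b).2 ⟨i, hb⟩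
  set ν := rootNormal P m with hν
  have hmP := root_mem_P hm
  have hcoef : ∀ b ∈ B, pairR (rootNormal P b) m = -(c b) := by
    intro b hb
    rw [← hc, pairR_sum_right]
    have step : ∀ b' ∈ B, pairR (rootNormal P b) (c b' • b') =
        if b' = b then -(c b') else 0 := by
      intro b' hb'
      rw [pairR_smul_right, table1 hBroot horth hb hb']
      by_cases h : b' = b <;> simp [h]
    rw [Finset.sum_congr rfl step, Finset.sum_ite_eq' B b (fun b' => -(c b')), if_pos hb]
  have hcle : ∀ b ∈ B, c b ≤ 1 := fun b hb => by
    have h := root_valid (hBroot b hb).1 m hmP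
    rw [hcoef b hb] at h; linarith
  have hcint : ∀ b ∈ B, ∃ n : ℤ, c b = (n : ℝ) := fun b hb => by
    obtain ⟨n, hn⟩ := pairR_int (rootNormal P b) m
      (rootNormal_lattice hP hWlat hW (hBroot b hb).1).2 hm.1
    rw [hcoef b hb] at hn
    exact ⟨-n, by push_cast; linarith⟩
  have hc1 : ∀ b ∈ B, c b = 1 → rootNormal P b = ν := fun b hb h1 => by
    apply dual_pt_eq_normal hm (rootNormal_mem_dual (hBroot b hb).1)
    rw [hcoef b hb, h1]
  have hSpair : ∀ i, ∀ b0 ∈ C i, pairR (rootNormal P (-b0)) m = ∑ b ∈ C i, c b := by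
    intro i b0 hb0
    have hb0B := hCsub i b0 hb0
    have hiff : ∀ b ∈ B, (rootFacet P (-b0) = rootFacet P (-b)) ↔ b ∈ C i := by
      intro b hbB
      constructor
      · intro h
        obtain ⟨j, hj⟩ := (hCcover b).1 hbB
        rcases eq_or_ne j i with rfl | hne
        · exact hj
        · exact absurd h (hCsep i j (Ne.symm hne) b0 hb0 b hj)
      · intro h; exact hCeq i b0 hb0 b h
    rw [← hc, pairR_sum_right]
    have step : ∀ b ∈ B, pairR (rootNormal P (-b0)) (c b • b) =
        if b ∈ C i then c b else 0 := by
      intro b hbB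
      rw [pairR_smul_right, table2 hP hWlat hW hBroot horth hb0B hbB]
      by_cases h : rootFacet P (-b0) = rootFacet P (-b)
      · rw [if_pos h, if_pos ((hiff b hbB).1 h)]; ring
      · rw [if_neg h, if_neg (fun hh => h ((hiff b hbB).2 hh))]; ring
    rw [Finset.sum_congr rfl step, Finset.sum_ite_mem,
      Finset.inter_eq_right.2 (fun b hb => hCsub i b hb)]
  have hSlo : ∀ i, -1 ≤ ∑ b ∈ C i, c b := fun i => by
    obtain ⟨b0, hb0⟩ := hCne i
    have h := root_valid (hBroot b0 (hCsub i b0 hb0)).2 m hmP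
    rw [hSpair i b0 hb0] at h; exact h
  have hSint : ∀ i, ∃ n : ℤ, (∑ b ∈ C i, c b) = (n : ℝ) := fun i => by
    obtain ⟨b0, hb0⟩ := hCne i
    obtain ⟨n, hn⟩ := pairR_int (rootNormal P (-b0)) m
      (rootNormal_lattice hP hWlat hW (hBroot b0 (hCsub i b0 hb0)).2).2 hm.1
    rw [hSpair i b0 hb0] at hn; exact ⟨n, hn⟩
  have hStight : ∀ i, (∑ b ∈ C i, c b) = -1 → ∀ b0 ∈ C i, rootNormal P (-b0) = ν := by
    intro i hSi b0 hb0
    apply dual_pt_eq_normal hm (rootNormal_mem_dual (hBroot b0 (hCsub i b0 hb0)).2)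
    rw [hSpair i b0 hb0, hSi]
  have hm0 : m ≠ 0 := fun h => by
    have h2 := root_pair_self hm; rw [h, pairR_zero_right] at h2; norm_num at h2
  have hθsep : ∀ i j, i ≠ j → ∀ b0 ∈ C i, ∀ b1 ∈ C j,
      rootNormal P (-b0) ≠ rootNormal P (-b1) := fun i j hij b0 hb0 b1 hb1 h =>
    hCsep i j hij b0 hb0 b1 hb1
      (normal_facet_eq (hBroot b0 (hCsub i b0 hb0)).2 (hBroot b1 (hCsub j b1 hb1)).2 h)
  by_cases hex1 : ∃ b0 ∈ B, c b0 = 1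
  · obtain ⟨b0, hb0B, hcb0⟩ := hex1
    have hνeq : rootNormal P b0 = ν := hc1 b0 hb0B hcb0
    obtain ⟨i0, hi0⟩ := (hCcover b0).1 hb0B
    have hnotight : ∀ i, (∑ b ∈ C i, c b) ≠ -1 := by
      intro i hSi
      obtain ⟨bi, hbi⟩ := hCne i
      have h2 := hStight i hSi bi hbi
      exact eta_ne_theta hP hWlat hW hBroot horth hb0B (hCsub i bi hbi)
        (hνeq.trans h2.symm)
    have hSnonneg : ∀ i, 0 ≤ ∑ b ∈ C i, c b := fun i =>
      (int_ge_cases (hSint i) (hSlo i)).resolve_left (hnotight i)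
    have honly : ∀ b ∈ B, b ≠ b0 → c b ≤ 0 := by
      intro b hb hne
      rcases int_le_cases (hcint b hb) (hcle b hb) with h | h
      · exact absurd ((hc1 b hb h).trans hνeq.symm)
          (eta_inj hBroot horth hb hb0B hne)
      · exact h
    have hvanish : ∀ i, i ≠ i0 → ∀ b ∈ C i, c b = 0 := by
      intro i hi b hb
      have hnp : ∀ b' ∈ C i, c b' ≤ 0 := fun b' hb' =>
        honly b' (hCsub i b' hb')
          (fun h => (Finset.disjoint_left.1 (hCdisj i i0 hi) hb') (h ▸ hi0))
      have h0 : ∑ b' ∈ C i, c b' = 0 :=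
        le_antisymm (Finset.sum_nonpos hnp) (hSnonneg i)
      exact (Finset.sum_eq_zero_iff_of_nonpos hnp).1 h0 b hb
    have hrest_np : ∀ b ∈ (C i0).erase b0, c b ≤ 0 := fun b hb =>
      honly b (hCsub i0 b (Finset.mem_of_mem_erase hb)) (Finset.ne_of_mem_erase hb)
    have hsplit : ∑ b ∈ C i0, c b = c b0 + ∑ b ∈ (C i0).erase b0, c b :=
      (Finset.add_sum_erase _ _ hi0).symm
    have hrest_lo : -1 ≤ ∑ b ∈ (C i0).erase b0, c b := by
      have h2 := hSnonneg i0; rw [hsplit, hcb0] at h2; linarith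
    rcases sum_nonpos_int_ge_neg_one _ _
        (fun b hb => hcint b (hCsub i0 b (Finset.mem_of_mem_erase hb))) hrest_np hrest_lo
      with hzero | ⟨b1, hb1, hcb1, hrest0⟩
    · left
      refine ⟨b0, hb0B, ?_⟩
      have hallz : ∀ b ∈ B, b ≠ b0 → c b = 0 := by
        intro b hb hne
        obtain ⟨i, hi⟩ := (hCcover b).1 hb
        rcases eq_or_ne i i0 with rfl | hii
        · exact hzero b (Finset.mem_erase.2 ⟨hne, hi⟩)
        · exact hvanish i hii b hi
      rw [← hc, Finset.sum_eq_single b0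
        (fun b hb hne => by rw [hallz b hb hne, zero_smul])
        (fun h => absurd hb0B h), hcb0, one_smul]
    · right; right
      have hb1Ci0 : b1 ∈ C i0 := Finset.mem_of_mem_erase hb1
      have hb1B := hCsub i0 b1 hb1Ci0
      have hb1ne : b1 ≠ b0 := Finset.ne_of_mem_erase hb1
      refine ⟨b0, hb0B, b1, hb1B, Ne.symm hb1ne, hCeq i0 b0 hi0 b1 hb1Ci0, ?_⟩
      have hallz : ∀ b ∈ B, b ≠ b0 → b ≠ b1 → c b = 0 := by
        intro b hb hne0 hne1
        obtain ⟨i, hi⟩ := (hCcover b).1 hb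
        rcases eq_or_ne i i0 with rfl | hii
        · exact hrest0 b (Finset.mem_erase.2 ⟨hne0, hi⟩) hne1
        · exact hvanish i hii b hi
      have hb0erase : b0 ∈ B.erase b1 := Finset.mem_erase.2 ⟨Ne.symm hb1ne, hb0B⟩
      rw [← hc, ← Finset.add_sum_erase _ _ hb1B,
        Finset.sum_eq_single b0
          (fun b hb hne => by
            rw [hallz b (Finset.mem_of_mem_erase hb) hne (Finset.ne_of_mem_erase hb),
              zero_smul])
          (fun h => absurd hb0erase h),
        hcb0, hcb1, one_smul, neg_one_smul]
      abel
  · push_neg at hex1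
    have hcle0 : ∀ b ∈ B, c b ≤ 0 := fun b hb =>
      (int_le_cases (hcint b hb) (hcle b hb)).resolve_left (hex1 b hb)
    have hextight : ∃ i0, ∑ b ∈ C i0, c b = -1 := by
      by_contra hno
      push_neg at hno
      have hz : ∀ b ∈ B, c b = 0 := by
        intro b hb
        obtain ⟨i, hi⟩ := (hCcover b).1 hb
        have hSnn : 0 ≤ ∑ b ∈ C i, c b :=
          (int_ge_cases (hSint i) (hSlo i)).resolve_left (hno i)
        have hnp : ∀ b' ∈ C i, c b' ≤ 0 := fun b' hb' => hcle0 b' (hCsub i b' hb')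
        exact (Finset.sum_eq_zero_iff_of_nonpos hnp).1
          (le_antisymm (Finset.sum_nonpos hnp) hSnn) b hi
      apply hm0
      rw [← hc]
      exact Finset.sum_eq_zero fun b hb => by rw [hz b hb, zero_smul]
    obtain ⟨i0, hSi0⟩ := hextight
    have hvan : ∀ i, i ≠ i0 → ∀ b ∈ C i, c b = 0 := by
      intro i hi
      have hSi : ∑ b ∈ C i, c b ≠ -1 := by
        intro h
        obtain ⟨bi, hbi⟩ := hCne i
        obtain ⟨b0, hb0⟩ := hCne i0
        exact hθsep i i0 hi bi hbi b0 hb0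
          ((hStight i h bi hbi).trans (hStight i0 hSi0 b0 hb0).symm)
      have hSnn := (int_ge_cases (hSint i) (hSlo i)).resolve_left hSi
      have hnp : ∀ b' ∈ C i, c b' ≤ 0 := fun b' hb' => hcle0 b' (hCsub i b' hb')
      exact fun b hb => (Finset.sum_eq_zero_iff_of_nonpos hnp).1
        (le_antisymm (Finset.sum_nonpos hnp) hSnn) b hb
    rcases sum_nonpos_int_ge_neg_one (C i0) c (fun b hb => hcint b (hCsub i0 b hb))
        (fun b hb => hcle0 b (hCsub i0 b hb)) (hSlo i0)
      with hzero | ⟨b1, hb1, hcb1, hrest0⟩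
    · exfalso; rw [Finset.sum_eq_zero hzero] at hSi0; norm_num at hSi0
    · right; left
      refine ⟨b1, hCsub i0 b1 hb1, ?_⟩
      have hallz : ∀ b ∈ B, b ≠ b1 → c b = 0 := by
        intro b hb hne
        obtain ⟨i, hi⟩ := (hCcover b).1 hb
        rcases eq_or_ne i i0 with rfl | hii
        · exact hrest0 b hi hne
        · exact hvan i hii b hi
      rw [← hc, Finset.sum_eq_single b1
        (fun b hb hne => by rw [hallz b hb hne, zero_smul])
        (fun h => absurd (hCsub i0 b1 hb1) h), hcb1, neg_one_smul]

end Table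
end Aux

open Aux

/-- Let `B` be a nonempty set of pairwise orthogonal semisimple roots of a reflexive
polytope `P`, partitioned into equivalence classes `C 0, …, C (t-1)` (two semisimple
roots `b ≠ b'` being equivalent when `F_{-b} = F_{-b'}`), and let
`A = R ∩ lin_ℝ(B)`. Then every root in `A` is semisimple,
`A = B ∪ (-B) ∪ {b - b' : b ≠ b' equivalent}`, `|A| = |B| + ∑ i, |C i|²`, and the
number of facets of `P` containing an element of `A` is `|B| + t ≤ 2|B|`. -/
theorem stmt6 {d : ℕ} (P : Set (Fin d → ℝ)) (hP : IsReflexive P)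
    (B : Finset (Fin d → ℝ)) (hBne : B.Nonempty)
    (hBroot : ∀ b ∈ B, IsRoot P b ∧ IsRoot P (-b))
    (horth : ∀ b ∈ B, ∀ b' ∈ B, b ≠ b' →
      pairR (rootNormal P b) b' = 0 ∧ pairR (rootNormal P b') b = 0)
    (t : ℕ) (C : Fin t → Finset (Fin d → ℝ))
    (hCne : ∀ i, (C i).Nonempty)
    (hCcover : ∀ b, b ∈ B ↔ ∃ i, b ∈ C i)
    (hCdisj : ∀ i j, i ≠ j → Disjoint (C i) (C j))
    (hCeq : ∀ i, ∀ b ∈ C i, ∀ b' ∈ C i, rootFacet P (-b) = rootFacet P (-b'))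
    (hCsep : ∀ i j, i ≠ j → ∀ b ∈ C i, ∀ b' ∈ C j,
      rootFacet P (-b) ≠ rootFacet P (-b'))
    (A : Set (Fin d → ℝ))
    (hA : A = {m | IsRoot P m} ∩ ↑(Submodule.span ℝ (B : Set (Fin d → ℝ)))) :
    (∀ m ∈ A, IsRoot P (-m)) ∧
    A = (B : Set (Fin d → ℝ)) ∪ (-(B : Set (Fin d → ℝ))) ∪
        {m | ∃ b ∈ B, ∃ b' ∈ B, b ≠ b' ∧ rootFacet P (-b) = rootFacet P (-b') ∧
          m = b - b'} ∧
    A.ncard = B.card + ∑ i, (C i).card ^ 2 ∧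
    {F | IsFacet P F ∧ ∃ m ∈ A, m ∈ intrinsicInterior ℝ F}.ncard = B.card + t ∧
    B.card + t ≤ 2 * B.card := by
  classical
  obtain ⟨W, hWlat, hW⟩ := hP.2.2
  have hCsub : ∀ i, ∀ b ∈ C i, b ∈ B := fun i b hb => (hCcover b).2 ⟨i, hb⟩
  have hclass := fun {m} (hm : IsRoot P m)
      (hs : m ∈ Submodule.span ℝ (B : Set (Fin d → ℝ))) =>
    classify hP hWlat hW hBroot horth hCne hCcover hCdisj hCeq hCsep hm hs
  have hsub : ∀ b ∈ B, ∀ b' ∈ B, b ≠ b' → rootFacet P (-b) = rootFacet P (-b') →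
      IsRoot P (b - b') ∧ rootFacet P (b - b') = rootFacet P b :=
    fun b hb b' hb' hne hfac =>
      sub_is_root hP hWlat hW (hBroot b hb).1 (hBroot b hb).2 (hBroot b' hb').1
        (hBroot b' hb').2 (horth b hb b' hb' hne).1 hfac
  have hb0 : ∀ b ∈ B, b ≠ (0 : Fin d → ℝ) := by
    intro b hb h
    have h1 := root_pair_self (hBroot b hb).1
    rw [h, pairR_zero_right] at h1
    norm_num at h1
  -- membership characterization
  have hmemA : ∀ m, m ∈ A ↔ IsRoot P m ∧ m ∈ Submodule.span ℝ (B : Set (Fin d → ℝ)) := by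
    intro m; rw [hA]; rfl
  -- Part 1
  have part1 : ∀ m ∈ A, IsRoot P (-m) := by
    intro m hm
    obtain ⟨hmr, hms⟩ := (hmemA m).1 hm
    rcases hclass hmr hms with ⟨b, hb, heq⟩ | ⟨b, hb, heq⟩ | ⟨b, hb, b', hb', hne, hfac, heq⟩
    · rw [heq]; exact (hBroot b hb).2
    · rw [heq, neg_neg]; exact (hBroot b hb).1
    · rw [heq, neg_sub]
      exact (hsub b' hb' b hb (Ne.symm hne) hfac.symm).1
  -- Part 2 : set description
  have part2 : A = (B : Set (Fin d → ℝ)) ∪ (-(B : Set (Fin d → ℝ))) ∪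
      {m | ∃ b ∈ B, ∃ b' ∈ B, b ≠ b' ∧ rootFacet P (-b) = rootFacet P (-b') ∧
        m = b - b'} := by
    ext m
    rw [hmemA m]
    simp only [Set.mem_union, Set.mem_neg, Finset.mem_coe, Set.mem_setOf_eq]
    constructor
    · rintro ⟨hmr, hms⟩
      rcases hclass hmr hms with ⟨b, hb, heq⟩ | ⟨b, hb, heq⟩ | h
      · exact Or.inl (Or.inl (by rw [heq]; exact hb))
      · exact Or.inl (Or.inr (by rw [heq, neg_neg]; exact hb))
      · exact Or.inr h
    · rintro ((h | h) | ⟨b, hb, b', hb', hne, hfac, rfl⟩)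
      · exact ⟨(hBroot m h).1, Submodule.subset_span h⟩
      · constructor
        · have := (hBroot (-m) h).2
          rwa [neg_neg] at this
        · have : -m ∈ Submodule.span ℝ (B : Set (Fin d → ℝ)) := Submodule.subset_span h
          have := Submodule.neg_mem _ this
          rwa [neg_neg] at this
      · exact ⟨(hsub b hb b' hb' hne hfac).1,
          Submodule.sub_mem _ (Submodule.subset_span hb) (Submodule.subset_span hb')⟩
  have hBcard : B.card = ∑ i, (C i).card := by
    have hBeq : B = Finset.univ.biUnion C := by
      ext b; simp [Finset.mem_biUnion, hCcover b]
    rw [hBeq, Finset.card_biUnion (fun i _ j _ hij => hCdisj i j hij)]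
  refine ⟨part1, part2, ?_, ?_, ?_⟩
  -- Part 3 : cardinality
  · set pairsF := (B ×ˢ B).filter
      (fun p => p.1 ≠ p.2 ∧ rootFacet P (-p.1) = rootFacet P (-p.2)) with hpairsF
    set Dfin := pairsF.image (fun p => p.1 - p.2) with hDfin
    set Bneg := B.image (fun b => -b) with hBneg
    have hAfin : A = ↑(B ∪ Bneg ∪ Dfin) := by
      rw [part2]
      ext m
      simp only [Finset.coe_union, Set.mem_union, Finset.mem_coe, Finset.mem_union,
        Finset.mem_image, Finset.mem_filter, Finset.mem_product, Set.mem_neg,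
        Set.mem_setOf_eq, hBneg, hDfin, hpairsF]
      constructor
      · rintro ((h | h) | ⟨b, hb, b', hb', hne, hfac, rfl⟩)
        · exact Or.inl (Or.inl h)
        · exact Or.inl (Or.inr ⟨-m, h, neg_neg m⟩)
        · exact Or.inr ⟨(b, b'), ⟨⟨hb, hb'⟩, hne, hfac⟩, rfl⟩
      · rintro ((h | ⟨b, hb, rfl⟩) | ⟨⟨b, b'⟩, ⟨⟨hb, hb'⟩, hne, hfac⟩, rfl⟩)
        · exact Or.inl (Or.inl h)
        · exact Or.inl (Or.inr (by rw [neg_neg]; exact hb))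
        · exact Or.inr ⟨b, hb, b', hb', hne, hfac, rfl⟩
    have hD1 : ∀ b ∈ B, ∀ b' ∈ B, b ≠ b' → ∀ e ∈ B, b - b' ≠ e := by
      intro b hb b' hb' hne e he h
      rcases eq_or_ne b e with rfl | hbe
      · exact hb0 b' hb' (by rwa [sub_eq_self] at h)
      · have h2 := table1 hBroot horth he hb
        have h3 := table1 hBroot horth he hb'
        rw [if_neg hbe] at h2
        have h5 : pairR (rootNormal P e) (b - b') = -1 := by
          rw [h]; exact root_pair_self (hBroot e he).1
        rw [pairR_sub_right, h2] at h5
        by_cases hb'e : b' = e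
        · rw [if_pos hb'e] at h3; rw [h3] at h5; norm_num at h5
        · rw [if_neg hb'e] at h3; rw [h3] at h5; norm_num at h5
    have hD2 : ∀ b ∈ B, ∀ b' ∈ B, b ≠ b' → ∀ e ∈ B, b - b' ≠ -e := by
      intro b hb b' hb' hne e he h
      have h1 := table1 hBroot horth hb' hb
      rw [if_neg hne] at h1
      have h2 := root_pair_self (hBroot b' hb').1
      have h3 : pairR (rootNormal P b') (b - b') = 1 := by
        rw [pairR_sub_right, h1, h2]; ring
      rw [h, pairR_neg_right, table1 hBroot horth hb' he] at h3
      by_cases hee : e = b'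
      · rw [hee] at h
        have h6 : b - b' + b' = -b' + b' := by rw [h]
        have h7 : b = 0 := by simpa using h6
        exact hb0 b hb h7
      · rw [if_neg hee] at h3; norm_num at h3
    have hdisj1 : Disjoint B Bneg := by
      rw [Finset.disjoint_left]
      intro b hb hmem
      rw [hBneg, Finset.mem_image] at hmem
      obtain ⟨e, he, hbe⟩ := hmem
      rcases eq_or_ne b e with rfl | hne
      · apply hb0 b hb
        funext i
        have h6 := congrFun hbe i
        simp only [Pi.neg_apply] at h6
        simp only [Pi.zero_apply]
        linarith
      · have h2 := table1 hBroot horth hb he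
        rw [if_neg (fun hh : e = b => hne hh.symm)] at h2
        have h1 : pairR (rootNormal P b) (-e) = -1 := by
          rw [hbe]; exact root_pair_self (hBroot b hb).1
        rw [pairR_neg_right, h2] at h1
        norm_num at h1
    have hdisj2 : Disjoint (B ∪ Bneg) Dfin := by
      rw [Finset.disjoint_right]
      intro m hmD hmBU
      rw [hDfin, Finset.mem_image] at hmD
      obtain ⟨⟨b, b'⟩, hpp, hsubm⟩ := hmD
      rw [hpairsF, Finset.mem_filter, Finset.mem_product] at hpp
      obtain ⟨⟨hb, hb'⟩, hne, hfac⟩ := hpp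
      rcases Finset.mem_union.1 hmBU with h | h
      · exact hD1 b hb b' hb' hne m h hsubm
      · rw [hBneg, Finset.mem_image] at h
        obtain ⟨e, he, hem⟩ := h
        exact hD2 b hb b' hb' hne e he (hsubm.trans hem.symm)
    have hDcard : Dfin.card = pairsF.card := by
      rw [hDfin]
      apply Finset.card_image_of_injOn
      intro p hp q hq h
      obtain ⟨b, b'⟩ := p
      obtain ⟨e, e'⟩ := q
      rw [Finset.mem_coe, hpairsF, Finset.mem_filter, Finset.mem_product] at hp hq
      obtain ⟨⟨hb, hb'⟩, hne, hfac⟩ := hp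
      obtain ⟨⟨he, he'⟩, hne', hfac'⟩ := hq
      have hv : pairR (rootNormal P b) (b - b') = -1 := by
        rw [pairR_sub_right, root_pair_self (hBroot b hb).1,
          table1 hBroot horth hb hb', if_neg (fun hh : b' = b => hne hh.symm)]
        ring
      have h' : b - b' = e - e' := h
      rw [h', pairR_sub_right, table1 hBroot horth hb he,
        table1 hBroot horth hb he'] at hv
      by_cases h1 : e = b
      · by_cases h2 : e' = b
        · exact absurd (h1.trans h2.symm) hne'
        · have hsnd : b' = e' := by
            rw [h1] at h'
            exact sub_right_inj.1 h'
          rw [Prod.mk.injEq]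
          exact ⟨h1.symm, hsnd⟩
      · rw [if_neg h1] at hv
        by_cases h2 : e' = b
        · rw [if_pos h2] at hv; norm_num at hv
        · rw [if_neg h2] at hv; norm_num at hv
    have hpairs_eq : pairsF = Finset.univ.biUnion
        (fun i => (C i ×ˢ C i).filter (fun p => p.1 ≠ p.2)) := by
      ext ⟨b, b'⟩
      simp only [hpairsF, Finset.mem_filter, Finset.mem_product, Finset.mem_biUnion,
        Finset.mem_univ, true_and]
      constructor
      · rintro ⟨⟨hb, hb'⟩, hne, hfac⟩
        obtain ⟨i, hi⟩ := (hCcover b).1 hb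
        obtain ⟨j, hj⟩ := (hCcover b').1 hb'
        rcases eq_or_ne i j with rfl | hij
        · exact ⟨i, ⟨hi, hj⟩, hne⟩
        · exact absurd hfac (hCsep i j hij b hi b' hj)
      · rintro ⟨i, ⟨hi, hi'⟩, hne⟩
        exact ⟨⟨hCsub i b hi, hCsub i b' hi'⟩, hne, hCeq i b hi b' hi'⟩
    have hpairs_card : pairsF.card = ∑ i, ((C i).card ^ 2 - (C i).card) := by
      rw [hpairs_eq, Finset.card_biUnion]
      · refine Finset.sum_congr rfl fun i _ => ?_
        have htot := Finset.card_filter_add_card_filter_not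
          (s := C i ×ˢ C i) (p := fun p => p.1 = p.2)
        have hdiag : ((C i ×ˢ C i).filter (fun p => p.1 = p.2))
            = (C i).image (fun b => (b, b)) := by
          ext ⟨a, b⟩
          simp only [Finset.mem_filter, Finset.mem_product, Finset.mem_image]
          constructor
          · rintro ⟨⟨ha, hb⟩, hab⟩
            exact ⟨a, ha, by rw [Prod.mk.injEq]; exact ⟨rfl, hab⟩⟩
          · rintro ⟨x, hx, hxx⟩
            rw [Prod.mk.injEq] at hxx
            obtain ⟨rfl, rfl⟩ := hxx
            exact ⟨⟨hx, hx⟩, rfl⟩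
        have hdcard : ((C i ×ˢ C i).filter (fun p => p.1 = p.2)).card = (C i).card := by
          rw [hdiag]
          exact Finset.card_image_of_injective _
            (fun x y hxy => by rw [Prod.mk.injEq] at hxy; exact hxy.1)
        have hprod : (C i ×ˢ C i).card = (C i).card ^ 2 := by
          rw [Finset.card_product]; ring
        have htot' : (C i).card + ((C i ×ˢ C i).filter (fun p => ¬ p.1 = p.2)).card
            = (C i).card ^ 2 := by
          rw [hdcard] at htot; rw [htot, hprod]
        simp only [ne_eq]
        omega
      · intro i _ j _ hij
        rw [Function.onFun, Finset.disjoint_left]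
        rintro ⟨a, b⟩ ha hb2
        rw [Finset.mem_filter, Finset.mem_product] at ha hb2
        exact Finset.disjoint_left.1 (hCdisj i j hij) ha.1.1 hb2.1.1
    have hBnegcard : Bneg.card = B.card := Finset.card_image_of_injective _ neg_injective
    rw [hAfin, Set.ncard_coe_finset, Finset.card_union_of_disjoint hdisj2,
      Finset.card_union_of_disjoint hdisj1, hBnegcard, hDcard, hpairs_card, hBcard]
    have hle : ∀ i, (C i).card ≤ (C i).card ^ 2 := fun i =>
      Nat.le_self_pow two_ne_zero _
    have hsum : ∑ i, (C i).card + ∑ i, ((C i).card ^ 2 - (C i).card)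
        = ∑ i, (C i).card ^ 2 := by
      rw [← Finset.sum_add_distrib]
      exact Finset.sum_congr rfl fun i _ => by have := hle i; omega
    omega
  -- Part 4 : facet count
  · set F1 := B.image (fun b => rootFacet P b) with hF1
    set F2 := B.image (fun b => rootFacet P (-b)) with hF2
    have hFset : {F | IsFacet P F ∧ ∃ m ∈ A, m ∈ intrinsicInterior ℝ F} = ↑(F1 ∪ F2) := by
      ext F
      simp only [Set.mem_setOf_eq, Finset.coe_union, Set.mem_union, Finset.mem_coe,
        Finset.mem_union, Finset.mem_image, hF1, hF2]
      constructor
      · rintro ⟨⟨ηF, hηF⟩, m, hmA, hrel⟩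
        obtain ⟨hmr, hms⟩ := (hmemA m).1 hmA
        have hFm : rootFacet P m = F := root_facet_eq hmr hηF hrel
        rcases hclass hmr hms with ⟨b, hb, heq⟩ | ⟨b, hb, heq⟩ |
          ⟨b, hb, b', hb', hne, hfac, heq⟩
        · exact Or.inl ⟨b, hb, by rw [← hFm, heq]⟩
        · exact Or.inr ⟨b, hb, by rw [← hFm, heq]⟩
        · refine Or.inl ⟨b, hb, ?_⟩
          rw [← hFm, heq]
          exact ((hsub b hb b' hb' hne hfac).2).symm
      · rintro (⟨b, hb, rfl⟩ | ⟨b, hb, rfl⟩)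
        · exact ⟨⟨_, (root_spec (hBroot b hb).1).1⟩, b,
            (hmemA b).2 ⟨(hBroot b hb).1, Submodule.subset_span hb⟩,
            (root_spec (hBroot b hb).1).2⟩
        · exact ⟨⟨_, (root_spec (hBroot b hb).2).1⟩, -b,
            (hmemA (-b)).2 ⟨(hBroot b hb).2, Submodule.neg_mem _ (Submodule.subset_span hb)⟩,
            (root_spec (hBroot b hb).2).2⟩
    rw [hFset, Set.ncard_coe_finset]
    have hF1card : F1.card = B.card := by
      rw [hF1]
      apply Finset.card_image_of_injOn
      intro b hb b' hb' h
      by_contra hne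
      exact eta_inj hBroot horth (Finset.mem_coe.1 hb) (Finset.mem_coe.1 hb') hne
        (rootFacet_normal_eq h)
    have hrep : ∀ i, (hCne i).choose ∈ C i := fun i => (hCne i).choose_spec
    have hF2eq : F2 = Finset.univ.image
        (fun i : Fin t => rootFacet P (-(hCne i).choose)) := by
      ext F
      simp only [hF2, Finset.mem_image, Finset.mem_univ, true_and]
      constructor
      · rintro ⟨b, hb, rfl⟩
        obtain ⟨i, hi⟩ := (hCcover b).1 hb
        exact ⟨i, hCeq i (hCne i).choose (hrep i) b hi⟩
      · rintro ⟨i, rfl⟩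
        exact ⟨(hCne i).choose, hCsub i _ (hrep i), rfl⟩
    have hF2card : F2.card = t := by
      rw [hF2eq, Finset.card_image_of_injOn]
      · simp
      · intro i _ j _ h
        by_contra hij
        exact hCsep i j hij _ (hrep i) _ (hrep j) h
    have hdisjF : Disjoint F1 F2 := by
      rw [Finset.disjoint_left]
      intro F hF1m hF2m
      rw [hF1, Finset.mem_image] at hF1m
      rw [hF2, Finset.mem_image] at hF2m
      obtain ⟨b, hb, hFb⟩ := hF1m
      obtain ⟨b', hb', hFb'⟩ := hF2m
      exact eta_ne_theta hP hWlat hW hBroot horth hb hb'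
        (rootFacet_normal_eq (hFb.trans hFb'.symm))
    rw [Finset.card_union_of_disjoint hdisjF, hF1card, hF2card]
  -- Part 5
  · have h1 : ∀ i, 1 ≤ (C i).card := fun i => Finset.card_pos.2 (hCne i)
    have h2 : t ≤ ∑ i, (C i).card := by
      calc t = ∑ _i : Fin t, 1 := by simp
      _ ≤ ∑ i, (C i).card := Finset.sum_le_sum fun i _ => h1 i
    omega
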